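/- Let m ≥ 2 and n₁,…,n_m ≥ 2 be integers, let S = [n₁] × ⋯ × [n_m], and let C = (C_α)_{α∈S} be complex numbers with C_α ≠ 0 for all α ∈ S. Define U_C := {ψ ∈ ℂ^{n₁} ⊗ ⋯ ⊗ ℂ^{n_m} : Σ_{α∈S, α₁+⋯+α_m = k} C_α ψ_α = 0 for every k ∈ {m, m+1, …, n₁+⋯+n_m}}, where ψ_α denotes the coordinate of ψ with respect to the standard product basis vector e_{α₁} ⊗ ⋯ ⊗ e_{α_m}. Then U_C is completely entangled (it contains no nonzero product vector) and dim U_C = n₁⋯n_m − (n₁+⋯+n_m) + m − 1. -/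

import Mathlib

/-
Common definitions.

We model the tensor product `ℂ^{n₁} ⊗ ⋯ ⊗ ℂ^{n_m}` concretely as
`EuclideanSpace ℂ (∀ i, Fin (n i))` (coordinates with respect to the standard
product basis), and the `d`-fold tensor power `(ℂ^a)^{⊗ d}` as
`EuclideanSpace ℂ (ι → Fin a)` for an index type `ι` of cardinality `d`.
-/

noncomputable section

open Finset

/-- The product (elementary tensor) vector `φ₁ ⊗ ⋯ ⊗ φ_m` in a multipartite space,
in coordinates. -/
def prodVec {m : ℕ} {n : Fin m → ℕ} (φ : ∀ i, EuclideanSpace ℂ (Fin (n i))) :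
    EuclideanSpace ℂ (∀ i, Fin (n i)) :=
  WithLp.toLp 2 (fun v => ∏ i, φ i (v i))

/-- The product vector `φ₁ ⊗ ⋯ ⊗ φ_m` in `(ℂ^n)^{⊗ m}`, in coordinates. -/
def prodVecC {m n : ℕ} (φ : Fin m → EuclideanSpace ℂ (Fin n)) :
    EuclideanSpace ℂ (Fin m → Fin n) :=
  WithLp.toLp 2 (fun v => ∏ i, φ i (v i))

/-- The product vector `φ₁ ⊗ φ₂` in a bipartite space, in coordinates. -/
def prodVec2 {ι₁ ι₂ : Type*} (φ₁ : EuclideanSpace ℂ ι₁) (φ₂ : EuclideanSpace ℂ ι₂) :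
    EuclideanSpace ℂ (ι₁ × ι₂) :=
  WithLp.toLp 2 (fun p => φ₁ p.1 * φ₂ p.2)

/-- Geometric measure of entanglement of a subspace of a multipartite space:
`E(U) = inf { 1 - ⟨φ₁⊗⋯⊗φ_m, Π_U (φ₁⊗⋯⊗φ_m)⟩ : ‖φ_i‖ = 1 }`, where we use that
`⟨x, Π_U x⟩ = ‖Π_U x‖²`. -/
def gme {m : ℕ} {n : Fin m → ℕ} (U : Submodule ℂ (EuclideanSpace ℂ (∀ i, Fin (n i)))) : ℝ :=
  sInf {x | ∃ φ : ∀ i, EuclideanSpace ℂ (Fin (n i)),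
    (∀ i, ‖φ i‖ = 1) ∧ x = 1 - ‖Submodule.orthogonalProjectionOnto U (prodVec φ)‖ ^ 2}

/-- Geometric measure of entanglement of a subspace of `(ℂ^n)^{⊗ m}`. -/
def gmeC {m n : ℕ} (U : Submodule ℂ (EuclideanSpace ℂ (Fin m → Fin n))) : ℝ :=
  sInf {x | ∃ φ : Fin m → EuclideanSpace ℂ (Fin n),
    (∀ i, ‖φ i‖ = 1) ∧ x = 1 - ‖Submodule.orthogonalProjectionOnto U (prodVecC φ)‖ ^ 2}

/-- Geometric measure of entanglement of a subspace of a bipartite space. -/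
def gme2 {ι₁ ι₂ : Type*} [Fintype ι₁] [Fintype ι₂]
    (U : Submodule ℂ (EuclideanSpace ℂ (ι₁ × ι₂))) : ℝ :=
  sInf {x | ∃ (φ₁ : EuclideanSpace ℂ ι₁) (φ₂ : EuclideanSpace ℂ ι₂),
    ‖φ₁‖ = 1 ∧ ‖φ₂‖ = 1 ∧ x = 1 - ‖Submodule.orthogonalProjectionOnto U (prodVec2 φ₁ φ₂)‖ ^ 2}

/-- The symmetric subspace `S^{|ι|}(ℂ^a)` of `(ℂ^a)^{⊗ ι}`: tensors invariant under all
permutations of the tensor factors. -/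
def symmSub (a : ℕ) (ι : Type*) : Submodule ℂ (EuclideanSpace ℂ (ι → Fin a)) where
  carrier := {ψ | ∀ σ : Equiv.Perm ι, ∀ v : ι → Fin a, ψ (v ∘ σ) = ψ v}
  zero_mem' := fun _ _ => rfl
  add_mem' := by
    intro x y hx hy σ v
    show x (v ∘ σ) + y (v ∘ σ) = x v + y v
    rw [hx σ v, hy σ v]
  smul_mem' := by
    intro c x hx σ v
    show c * x (v ∘ σ) = c * x v
    rw [hx σ v]

/-- Splitting an index `v : Fin d ⊕ Fin d → Fin a` into a pair of indices, realizing
`(ℂ^a)^{⊗ 2d} ≅ (ℂ^a)^{⊗ d} ⊗ (ℂ^a)^{⊗ d}`. -/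
def pairSplit {a d : ℕ} (v : (Fin d ⊕ Fin d) → Fin a) : (Fin d → Fin a) × (Fin d → Fin a) :=
  (v ∘ Sum.inl, v ∘ Sum.inr)

/-- The symmetric subspace `S^{2d}(ℂ^a)`, viewed inside
`(ℂ^a)^{⊗ d} ⊗ (ℂ^a)^{⊗ d} = EuclideanSpace ℂ ((Fin d → Fin a) × (Fin d → Fin a))`. -/
def symmSub2 (a d : ℕ) :
    Submodule ℂ (EuclideanSpace ℂ ((Fin d → Fin a) × (Fin d → Fin a))) where
  carrier := {ψ | ∀ σ : Equiv.Perm (Fin d ⊕ Fin d), ∀ v : (Fin d ⊕ Fin d) → Fin a,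
    ψ (pairSplit (v ∘ σ)) = ψ (pairSplit v)}
  zero_mem' := fun _ _ => rfl
  add_mem' := by
    intro x y hx hy σ v
    show x (pairSplit (v ∘ σ)) + y (pairSplit (v ∘ σ)) = x (pairSplit v) + y (pairSplit v)
    rw [hx σ v, hy σ v]
  smul_mem' := by
    intro c x hx σ v
    show c * x (pairSplit (v ∘ σ)) = c * x (pairSplit v)
    rw [hx σ v]

/-- The tensor product `W₁ ⊗ W₂` of subspaces, as the span of the elementary tensors,
inside the concrete bipartite space. -/
def tensorPairs {ι₁ ι₂ : Type*} [Fintype ι₁] [Fintype ι₂]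
    (W₁ : Submodule ℂ (EuclideanSpace ℂ ι₁)) (W₂ : Submodule ℂ (EuclideanSpace ℂ ι₂)) :
    Submodule ℂ (EuclideanSpace ℂ (ι₁ × ι₂)) :=
  Submodule.span ℂ {χ | ∃ ψ ∈ W₁, ∃ φ ∈ W₂, χ = prodVec2 ψ φ}

/-- The tensor product `U ⊗ V` of two bipartite subspaces
`U, V ⊆ ℂ^{ι₁} ⊗ ℂ^{ι₂}`, viewed as a bipartite subspace of
`(ℂ^{ι₁} ⊗ ℂ^{ι₁}) ⊗ (ℂ^{ι₂} ⊗ ℂ^{ι₂})` via the regrouping isomorphism that swaps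
the middle two tensor factors. -/
def tensorSub {ι₁ ι₂ : Type*} [Fintype ι₁] [Fintype ι₂]
    (U V : Submodule ℂ (EuclideanSpace ℂ (ι₁ × ι₂))) :
    Submodule ℂ (EuclideanSpace ℂ ((ι₁ × ι₁) × (ι₂ × ι₂))) :=
  Submodule.span ℂ {χ | ∃ ψ ∈ U, ∃ φ ∈ V,
    χ = WithLp.toLp 2 (fun p => ψ (p.1.1, p.2.1) * φ (p.1.2, p.2.2))}

/-- Entrywise complex conjugate of a vector, with respect to the standard basis. -/
def conjVec {ι : Type*} (ψ : EuclideanSpace ℂ ι) : EuclideanSpace ℂ ι :=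
  WithLp.toLp 2 (fun v => starRingEnd ℂ (ψ v))

/-- The subspace `Ū` of entrywise complex conjugates of vectors of `U`. -/
def conjSubmodule {ι : Type*} (U : Submodule ℂ (EuclideanSpace ℂ ι)) :
    Submodule ℂ (EuclideanSpace ℂ ι) where
  carrier := conjVec '' U
  zero_mem' := ⟨0, U.zero_mem, by
    ext v; show starRingEnd ℂ 0 = 0; exact map_zero _⟩
  add_mem' := by
    rintro a b ⟨x, hx, rfl⟩ ⟨y, hy, rfl⟩
    exact ⟨x + y, U.add_mem hx hy, by
      ext v; exact map_add (starRingEnd ℂ) (x v) (y v)⟩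
  smul_mem' := by
    rintro c a ⟨x, hx, rfl⟩
    refine ⟨starRingEnd ℂ c • x, U.smul_mem _ hx, ?_⟩
    ext v
    show starRingEnd ℂ (starRingEnd ℂ c * x v) = c * starRingEnd ℂ (x v)
    simp

/-- The content (type) of a word `w : Fin d → Fin a`: the vector `α ∈ ℤ_{≥0}^a`
recording how many times each letter occurs. -/
def wordContent {a d : ℕ} (w : Fin d → Fin a) : Fin a → ℕ :=
  fun i => (Finset.univ.filter fun j => w j = i).card

/-- The monomial orthonormal basis vector `|α⟩ = C(d,α)^{1/2} Π_{S^d(ℂ^a)} (e₁^{⊗α₁} ⊗ ⋯ ⊗ e_a^{⊗α_a})`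
of the symmetric subspace `S^d(ℂ^a)`, where `α = wordContent w` and
`e₁^{⊗α₁} ⊗ ⋯ ⊗ e_a^{⊗α_a}` is the standard basis vector of `(ℂ^a)^{⊗ d}` indexed by any word `w`
of content `α` (the projection does not depend on the choice of such a word). -/
def monVec (a d : ℕ) (w : Fin d → Fin a) : EuclideanSpace ℂ (Fin d → Fin a) :=
  (Real.sqrt (Nat.multinomial Finset.univ (wordContent w)) : ℂ) •
    (Submodule.orthogonalProjectionOnto (symmSub a (Fin d)) (EuclideanSpace.single w 1) :
      EuclideanSpace ℂ (Fin d → Fin a))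

/-- The squared Schmidt coefficients of a bipartite vector `ψ`, i.e. the eigenvalues of
`M Mᴴ` where `M` is the coefficient matrix of `ψ`. -/
def schmidtSqCoeffs {ι₁ ι₂ : Type*} [Fintype ι₁] [Fintype ι₂] [DecidableEq ι₁]
    (ψ : EuclideanSpace ℂ (ι₁ × ι₂)) : ι₁ → ℝ :=
  (Matrix.isHermitian_mul_conjTranspose_self (Matrix.of fun i j => ψ (i, j))).eigenvalues

/-- The Rényi `p`-entropy of (the squared Schmidt coefficients of) a bipartite vector. -/
def renyiEnt (p : ℝ) {ι₁ ι₂ : Type*} [Fintype ι₁] [Fintype ι₂] [DecidableEq ι₁]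
    (ψ : EuclideanSpace ℂ (ι₁ × ι₂)) : ℝ :=
  (1 / (1 - p)) * Real.logb 2 (∑ i, schmidtSqCoeffs ψ i ^ p)

/-- The minimum output Rényi `p`-entropy of a bipartite subspace. -/
def hminEnt (p : ℝ) {ι₁ ι₂ : Type*} [Fintype ι₁] [Fintype ι₂] [DecidableEq ι₁]
    (U : Submodule ℂ (EuclideanSpace ℂ (ι₁ × ι₂))) : ℝ :=
  sInf {x | ∃ ψ ∈ U, ‖ψ‖ = 1 ∧ x = renyiEnt p ψ}

end


noncomputable section Stmt0Aux

open Finset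

lemma stmt0_deg_mem {m : ℕ} {n : Fin m → ℕ} (α : ∀ i, Fin (n i)) :
    (∑ i, ((α i : ℕ) + 1)) ∈ Finset.Icc m (∑ i, n i) := by
  rw [Finset.mem_Icc]
  constructor
  · calc m = ∑ _i : Fin m, 1 := by simp
    _ ≤ _ := Finset.sum_le_sum fun i _ => by omega
  · exact Finset.sum_le_sum fun i _ => (α i).isLt

def stmt0L (m : ℕ) (n : Fin m → ℕ) (C : (∀ i, Fin (n i)) → ℂ) :
    EuclideanSpace ℂ (∀ i, Fin (n i)) →ₗ[ℂ] ((Finset.Icc m (∑ i, n i)) → ℂ) where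
  toFun ψ := fun k => ∑ α ∈ Finset.univ.filter
      (fun α : ∀ i, Fin (n i) => (∑ i, ((α i : ℕ) + 1)) = (k : ℕ)), C α * ψ α
  map_add' x y := by
    funext k
    simp [PiLp.add_apply, mul_add, Finset.sum_add_distrib]
  map_smul' c x := by
    funext k
    simp [PiLp.smul_apply, smul_eq_mul, Finset.mul_sum, mul_left_comm]

lemma stmt0_exists_deg {m : ℕ} {n : Fin m → ℕ} (hn : ∀ i, 2 ≤ n i) {k : ℕ}
    (h1 : m ≤ k) (h2 : k ≤ ∑ i, n i) :
    ∃ α : ∀ i, Fin (n i), (∑ i, ((α i : ℕ) + 1)) = k := by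
  induction k, h1 using Nat.le_induction with
  | base =>
    refine ⟨fun i => ⟨0, by have := hn i; omega⟩, ?_⟩
    simp
  | succ k hk ih =>
    obtain ⟨α, hα⟩ := ih (by omega)
    have hex : ∃ i, (α i : ℕ) + 1 < n i := by
      by_contra h
      push_neg at h
      have : ∑ i, n i ≤ ∑ i, ((α i : ℕ) + 1) := Finset.sum_le_sum fun i _ => h i
      omega
    obtain ⟨i, hi⟩ := hex
    refine ⟨Function.update α i ⟨(α i : ℕ) + 1, hi⟩, ?_⟩
    have hupd : (fun j => ((Function.update α i (⟨(α i : ℕ) + 1, hi⟩ : Fin (n i)) j : ℕ) + 1))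
        = Function.update (fun j => ((α j : ℕ) + 1)) i ((α i : ℕ) + 2) := by
      funext j
      rcases eq_or_ne j i with rfl | hj
      · simp
      · simp [Function.update_of_ne hj]
    rw [hupd, Finset.sum_update_of_mem (Finset.mem_univ i)]
    have he := Finset.add_sum_erase Finset.univ (fun j => ((α j : ℕ) + 1)) (Finset.mem_univ i)
    rw [Finset.sdiff_singleton_eq_erase]
    omega

lemma stmt0L_single (m : ℕ) (n : Fin m → ℕ) (C : (∀ i, Fin (n i)) → ℂ)
    (α₀ : ∀ i, Fin (n i)) (c : ℂ) (k' : Finset.Icc m (∑ i, n i)) :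
    stmt0L m n C (EuclideanSpace.single α₀ c) k' =
      if (∑ i, ((α₀ i : ℕ) + 1)) = (k' : ℕ) then C α₀ * c else 0 := by
  classical
  show (∑ α ∈ Finset.univ.filter
      (fun α : ∀ i, Fin (n i) => (∑ i, ((α i : ℕ) + 1)) = (k' : ℕ)),
      C α * EuclideanSpace.single α₀ c α) = _
  have key : ∀ α : ∀ i, Fin (n i),
      C α * EuclideanSpace.single α₀ c α = if α = α₀ then C α₀ * c else 0 := by
    intro α
    rw [EuclideanSpace.single_apply]
    split_ifs with h <;> simp [h]
  rw [Finset.sum_congr rfl fun α _ => key α,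
    Finset.sum_ite_eq' _ α₀ (fun _ => C α₀ * c)]
  simp [Finset.mem_filter]

end Stmt0Aux

/-- The subspace `U_C` cut out by the coefficients `C` (here indices are
`0`-based, so `α i + 1` plays the role of the `1`-based index `α_i ∈ [n_i]`) is completely
entangled and has the maximal dimension `n₁⋯n_m − (n₁+⋯+n_m) + m − 1`. -/
theorem stmt0 (m : ℕ) (hm : 2 ≤ m) (n : Fin m → ℕ) (hn : ∀ i, 2 ≤ n i)
    (C : (∀ i, Fin (n i)) → ℂ) (hC : ∀ α, C α ≠ 0)
    (U : Submodule ℂ (EuclideanSpace ℂ (∀ i, Fin (n i))))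
    (hU : ∀ ψ : EuclideanSpace ℂ (∀ i, Fin (n i)), ψ ∈ U ↔
      ∀ k : ℕ, ∑ α ∈ Finset.univ.filter
          (fun α : ∀ i, Fin (n i) => (∑ i, ((α i : ℕ) + 1)) = k),
        C α * ψ α = 0) :
    (∀ φ : ∀ i, EuclideanSpace ℂ (Fin (n i)), prodVec φ ∈ U → prodVec φ = 0) ∧
    (Module.finrank ℂ U : ℤ) = (∏ i, (n i : ℤ)) - (∑ i, (n i : ℤ)) + m - 1 := by
  constructor
  · -- complete entanglement
    intro φ hmem
    by_cases h0 : ∃ i, φ i = 0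
    · obtain ⟨i, hi⟩ := h0
      ext v
      show (∏ j, φ j (v j)) = 0
      exact Finset.prod_eq_zero (Finset.mem_univ i) (by rw [hi]; rfl)
    · push_neg at h0
      exfalso
      have hs : ∀ i, (Finset.univ.filter fun j => φ i j ≠ 0).Nonempty := by
        intro i
        obtain ⟨j, hj⟩ : ∃ j, φ i j ≠ 0 := by
          by_contra h
          push_neg at h
          exact h0 i (PiLp.ext h)
        exact ⟨j, Finset.mem_filter.mpr ⟨Finset.mem_univ _, hj⟩⟩
      set α₀ : ∀ i, Fin (n i) := fun i => (Finset.univ.filter fun j => φ i j ≠ 0).min' (hs i)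
        with hα₀def
      have hne : ∀ i, φ i (α₀ i) ≠ 0 := fun i =>
        (Finset.mem_filter.mp (Finset.min'_mem _ (hs i))).2
      have hkey := (hU _).mp hmem (∑ i, ((α₀ i : ℕ) + 1))
      have hsingle : ∑ α ∈ Finset.univ.filter
          (fun α : ∀ i, Fin (n i) => (∑ i, ((α i : ℕ) + 1)) = ∑ i, ((α₀ i : ℕ) + 1)),
          C α * prodVec φ α = C α₀ * prodVec φ α₀ := by
        refine Finset.sum_eq_single_of_mem α₀
          (Finset.mem_filter.mpr ⟨Finset.mem_univ _, rfl⟩) ?_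
        intro β hβ hβne
        rcases eq_or_ne (prodVec φ β) 0 with h | h
        · rw [h, mul_zero]
        exfalso
        have hfac : ∀ i, φ i (β i) ≠ 0 := by
          intro i hz
          exact h (Finset.prod_eq_zero (Finset.mem_univ i) hz)
        have hle : ∀ i, (α₀ i : ℕ) ≤ (β i : ℕ) := fun i =>
          Fin.le_def.mp (Finset.min'_le (Finset.univ.filter fun j => φ i j ≠ 0) (β i)
            (Finset.mem_filter.mpr ⟨Finset.mem_univ _, hfac i⟩))
        obtain ⟨i, hi⟩ : ∃ i, β i ≠ α₀ i := Function.ne_iff.mp hβne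
        have hlt : (α₀ i : ℕ) < (β i : ℕ) :=
          lt_of_le_of_ne (hle i) fun hh => hi (Fin.ext hh.symm)
        have hslt : (∑ j, ((α₀ j : ℕ) + 1)) < ∑ j, ((β j : ℕ) + 1) :=
          Finset.sum_lt_sum (fun j _ => by have := hle j; omega)
            ⟨i, Finset.mem_univ i, by omega⟩
        rw [Finset.mem_filter] at hβ
        omega
      rw [hsingle] at hkey
      refine (mul_ne_zero (hC α₀) ?_) hkey
      show (∏ i, φ i (α₀ i)) ≠ 0
      exact Finset.prod_ne_zero_iff.mpr fun i _ => hne i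
  · -- dimension
    have hUker : U = LinearMap.ker (stmt0L m n C) := by
      ext ψ
      rw [hU, LinearMap.mem_ker]
      constructor
      · intro h
        funext k
        exact h (k : ℕ)
      · intro h k
        by_cases hk : k ∈ Finset.Icc m (∑ i, n i)
        · exact congrFun h ⟨k, hk⟩
        · refine Finset.sum_eq_zero fun α hα =>
            absurd (Finset.mem_filter.mp hα).2 fun hh => hk ?_
          rw [← hh]
          exact stmt0_deg_mem α
    have hsurj : Function.Surjective (stmt0L m n C) := by
      intro f
      choose g hg using fun k : Finset.Icc m (∑ i, n i) =>
        stmt0_exists_deg hn (Finset.mem_Icc.mp k.2).1 (Finset.mem_Icc.mp k.2).2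
      refine ⟨∑ k, f k • EuclideanSpace.single (g k) ((C (g k))⁻¹), ?_⟩
      funext k'
      rw [map_sum]
      simp only [map_smul, Finset.sum_apply, Pi.smul_apply, stmt0L_single, hg, smul_eq_mul]
      simp only [← Subtype.ext_iff, mul_ite, mul_zero]
      rw [Finset.sum_ite_eq' Finset.univ k' (fun k => f k * (C (g k) * (C (g k))⁻¹))]
      simp [mul_inv_cancel₀ (hC _)]
    have hrn := LinearMap.finrank_range_add_finrank_ker (stmt0L m n C)
    rw [LinearMap.range_eq_top.mpr hsurj] at hrn
    have h1 : Module.finrank ℂ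
        (⊤ : Submodule ℂ ((Finset.Icc m (∑ i, n i)) → ℂ)) = (∑ i, n i) + 1 - m := by
      rw [finrank_top, Module.finrank_pi]
      simp [Nat.card_Icc]
    have h2 : Module.finrank ℂ (EuclideanSpace ℂ (∀ i, Fin (n i))) = ∏ i, n i := by
      rw [finrank_euclideanSpace]
      simp
    rw [h1, h2] at hrn
    rw [hUker]
    have hmN : 2 * m ≤ ∑ i, n i := by
      calc 2 * m = ∑ _i : Fin m, 2 := by simp [Nat.mul_comm]
      _ ≤ _ := Finset.sum_le_sum fun i _ => hn i
    have hprod : ((∏ i, n i : ℕ) : ℤ) = ∏ i, (n i : ℤ) := by push_cast; rfl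
    have hsum : ((∑ i, n i : ℕ) : ℤ) = ∑ i, (n i : ℤ) := by push_cast; rfl
    rw [← hprod, ← hsum]
    omega
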